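/- Let f∈𝒦⁻. Then every finitely supported sequence φ∈ℓ²_fin(ℕ) belongs to the domain of T_f, i.e., the limit lim_{m→∞} T_{f,m}φ exists in ℓ²(ℕ). In particular T_f is a densely defined operator on ℓ²(ℕ). -/

import Mathlib

open Filter Topology
open scoped ENNReal

noncomputable section

abbrev l2 : Type := lp (fun _ : ℕ => ℂ) 2

def xi (n : ℕ) : l2 := lp.single 2 n 1

def FinSupp (φ : l2) : Prop := (Function.support (⇑φ : ℕ → ℂ)).Finite

/-- The class 𝒦. -/
def MemK (f : ℕ → ℝ) : Prop := 0 < f 0 ∧ ∀ n, f n < f (n + 1)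

/-- The class 𝒦⁻. -/
def MemKminus (f : ℕ → ℝ) : Prop := MemK f ∧ Summable (fun n => 1 / (f n) ^ 2)

def fsq (f : ℕ → ℝ) : ℕ → ℝ := fun n => (f n) ^ 2

/-- the sequence of the multiplication operator `f(N)` applied to φ -/
def mulSeq (f : ℕ → ℝ) (φ : ℕ → ℂ) : ℕ → ℂ := fun n => ((f n : ℝ) : ℂ) * φ n

/-- the sequence of `f(N)^p` applied to φ -/
def powSeq (f : ℕ → ℝ) (p : ℕ) (φ : ℕ → ℂ) : ℕ → ℂ := fun n => (((f n) ^ p : ℝ) : ℂ) * φ n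

/-- coordinates of `T_{f,m} φ`. -/
def TfmSeq (f : ℕ → ℝ) (m : ℕ) (φ : ℕ → ℂ) : ℕ → ℂ := fun n =>
  Complex.I * ∑ k ∈ Finset.Icc 1 m,
    ((if k ≤ n then φ (n - k) / ((f n - f (n - k) : ℝ) : ℂ) else 0)
      - φ (n + k) / ((f (n + k) - f n : ℝ) : ℂ))

/-- `(φ, ψ)` is in the graph of `T_f`. -/
def InGraphTf (f : ℕ → ℝ) (φ ψ : l2) : Prop :=
  ∃ h : ∀ m, Memℓp (TfmSeq f m (⇑φ)) 2,
    Tendsto (fun m => (⟨TfmSeq f m (⇑φ), h m⟩ : l2)) atTop (𝓝 ψ)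

/-! ### Auxiliary lemmas -/

/-- candidate limit for `φ = c • ξ_j`. -/
def psiFun (f : ℕ → ℝ) (c : ℂ) (j : ℕ) : ℕ → ℂ := fun n =>
  if n = j then 0 else Complex.I * (c / ((f n - f j : ℝ) : ℂ))

lemma memK_strictMono {f : ℕ → ℝ} (hf : MemKminus f) : StrictMono f :=
  strictMono_nat_of_lt_succ hf.1.2

lemma memK_pos {f : ℕ → ℝ} (hf : MemKminus f) (n : ℕ) : 0 < f n :=
  lt_of_lt_of_le hf.1.1 ((memK_strictMono hf).monotone (Nat.zero_le n))

lemma summable_psi (f : ℕ → ℝ) (hf : MemKminus f) (j : ℕ) :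
    Summable (fun n => if n = j then (0 : ℝ) else ((f n - f j) ^ 2)⁻¹) := by
  have hpos := memK_pos hf
  have hmono := memK_strictMono hf
  have htend : Tendsto (fun n => 1 / f n ^ 2) atTop (𝓝 0) := hf.2.tendsto_atTop_zero
  have hev : ∀ᶠ n in atTop, 1 / f n ^ 2 < 1 / (2 * f j) ^ 2 :=
    htend.eventually_lt_const (div_pos one_pos (by nlinarith [hpos j]))
  obtain ⟨K, hK⟩ := eventually_atTop.mp (hev.and (eventually_ge_atTop (j + 1)))
  have hKbig : ∀ n, K ≤ n → 2 * f j < f n ∧ j < n := by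
    intro n hn
    obtain ⟨h1, h2⟩ := hK n hn
    have h1' := (div_lt_div_iff₀ (by nlinarith [hpos n]) (by nlinarith [hpos j])).mp h1
    constructor
    · nlinarith [hpos n, hpos j]
    · omega
  refine (summable_nat_add_iff K).1 ?_
  have hmaj : Summable (fun n => 4 * (1 / f (n + K) ^ 2)) :=
    ((summable_nat_add_iff K).2 hf.2).mul_left 4
  refine Summable.of_nonneg_of_le (fun n => ?_) (fun n => ?_) hmaj
  · split_ifs <;> positivity
  · obtain ⟨hb, hj⟩ := hKbig (n + K) (Nat.le_add_left K n)
    have hne : n + K ≠ j := by omega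
    rw [if_neg hne]
    have h0 : 0 < f (n + K) := hpos _
    have h1 : 0 < f (n + K) ^ 2 / 4 := by positivity
    have h2 : f (n + K) ^ 2 / 4 ≤ (f (n + K) - f j) ^ 2 := by nlinarith [hpos j]
    calc ((f (n + K) - f j) ^ 2)⁻¹ ≤ (f (n + K) ^ 2 / 4)⁻¹ := inv_anti₀ h1 h2
      _ = 4 * (1 / f (n + K) ^ 2) := by field_simp

lemma memℓp_psi (f : ℕ → ℝ) (hf : MemKminus f) (c : ℂ) (j : ℕ) :
    Memℓp (psiFun f c j) 2 := by
  apply memℓp_gen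
  have h2 : (2 : ℝ≥0∞).toReal = 2 := by norm_num
  rw [h2]
  have key : ∀ n, ‖psiFun f c j n‖ ^ (2:ℝ) =
      ‖c‖ ^ 2 * (if n = j then (0 : ℝ) else ((f n - f j) ^ 2)⁻¹) := by
    intro n
    rw [show ((2:ℝ)) = ((2:ℕ):ℝ) by norm_num, Real.rpow_natCast]
    unfold psiFun
    by_cases hn : n = j
    · simp [hn]
    · rw [if_neg hn, if_neg hn, norm_mul, Complex.norm_I, one_mul, norm_div,
        Complex.norm_real, div_pow, Real.norm_eq_abs, sq_abs, div_eq_mul_inv]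
  refine Summable.congr ?_ (fun n => (key n).symm)
  exact (summable_psi f hf j).mul_left _

lemma memℓp_of_finite_support (g : ℕ → ℂ) (N : ℕ) (h : ∀ n, N ≤ n → g n = 0) :
    Memℓp g 2 := by
  apply memℓp_gen
  apply summable_of_ne_finset_zero (s := Finset.range N)
  intro n hn
  have : g n = 0 := h n (by simpa using hn)
  simp [this, Real.zero_rpow (by norm_num : (2:ℝ≥0∞).toReal ≠ 0)]

/-- Closed form of `TfmSeq` on a single basis vector. -/
lemma TfmSeq_single (f : ℕ → ℝ) (c : ℂ) (j m n : ℕ) :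
    TfmSeq f m (fun i => if i = j then c else 0) n
      = if n ≠ j ∧ j ≤ n + m ∧ n ≤ j + m then Complex.I * (c / ((f n - f j : ℝ) : ℂ))
        else 0 := by
  have hunfold : TfmSeq f m (fun i => if i = j then c else 0) n
      = Complex.I * ∑ k ∈ Finset.Icc 1 m,
        ((if k ≤ n then (if n - k = j then c else 0) / ((f n - f (n - k) : ℝ) : ℂ) else 0)
          - (if n + k = j then c else 0) / ((f (n + k) - f n : ℝ) : ℂ)) := rfl
  rw [hunfold]
  rcases Nat.lt_trichotomy n j with h | h | h
  · -- n < j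
    have hsum : ∑ k ∈ Finset.Icc 1 m,
        ((if k ≤ n then (if n - k = j then c else 0) / ((f n - f (n - k) : ℝ) : ℂ) else 0)
          - (if n + k = j then c else 0) / ((f (n + k) - f n : ℝ) : ℂ))
        = ∑ k ∈ Finset.Icc 1 m,
          (if k = j - n then -(c / ((f j - f n : ℝ) : ℂ)) else 0) := by
      refine Finset.sum_congr rfl (fun k hk => ?_)
      rw [Finset.mem_Icc] at hk
      by_cases hk' : k = j - n
      · subst hk'
        have h1 : n + (j - n) = j := by omega
        have h2 : ∀ hkn : j - n ≤ n, ¬ (n - (j - n) = j) := by intro hkn; omega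
        rw [h1, if_pos (rfl : j = j), if_pos (rfl : j - n = j - n)]
        by_cases hkn : j - n ≤ n
        · rw [if_pos hkn, if_neg (h2 hkn), zero_div, zero_sub]
        · rw [if_neg hkn, zero_sub]
      · have h1 : ¬ (n + k = j) := by omega
        have h2 : ∀ hkn : k ≤ n, ¬ (n - k = j) := by intro hkn; omega
        rw [if_neg hk', if_neg h1, zero_div, sub_zero]
        by_cases hkn : k ≤ n
        · rw [if_pos hkn, if_neg (h2 hkn), zero_div]
        · rw [if_neg hkn]
    rw [hsum, Finset.sum_ite_eq' (Finset.Icc 1 m) (j - n) (fun _ => -(c / ((f j - f n : ℝ) : ℂ)))]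
    have hcast : ((f n - f j : ℝ) : ℂ) = -((f j - f n : ℝ) : ℂ) := by push_cast; ring
    simp only [Finset.mem_Icc]
    by_cases hc : j ≤ n + m
    · rw [if_pos (by omega : 1 ≤ j - n ∧ j - n ≤ m),
        if_pos (by omega : n ≠ j ∧ j ≤ n + m ∧ n ≤ j + m), hcast, div_neg, mul_neg]
    · rw [if_neg (by omega), if_neg (by omega), mul_zero]
  · -- n = j
    subst h
    rw [if_neg (by simp)]
    rw [Finset.sum_eq_zero, mul_zero]
    intro k hk
    rw [Finset.mem_Icc] at hk
    have h1 : ¬ (n + k = n) := by omega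
    have h2 : ∀ hkn : k ≤ n, ¬ (n - k = n) := by intro hkn; omega
    rw [if_neg h1, zero_div, sub_zero]
    by_cases hkn : k ≤ n
    · rw [if_pos hkn, if_neg (h2 hkn), zero_div]
    · rw [if_neg hkn]
  · -- j < n
    have hsum : ∑ k ∈ Finset.Icc 1 m,
        ((if k ≤ n then (if n - k = j then c else 0) / ((f n - f (n - k) : ℝ) : ℂ) else 0)
          - (if n + k = j then c else 0) / ((f (n + k) - f n : ℝ) : ℂ))
        = ∑ k ∈ Finset.Icc 1 m,
          (if k = n - j then c / ((f n - f j : ℝ) : ℂ) else 0) := by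
      refine Finset.sum_congr rfl (fun k hk => ?_)
      rw [Finset.mem_Icc] at hk
      have h1 : ¬ (n + k = j) := by omega
      rw [if_neg h1, zero_div, sub_zero]
      by_cases hk' : k = n - j
      · subst hk'
        have h2 : n - (n - j) = j := by omega
        rw [if_pos (by omega : n - j ≤ n), h2, if_pos (rfl : j = j),
          if_pos (rfl : n - j = n - j)]
      · rw [if_neg hk']
        by_cases hkn : k ≤ n
        · rw [if_pos hkn, if_neg (by omega : ¬ (n - k = j)), zero_div]
        · rw [if_neg hkn]
    rw [hsum, Finset.sum_ite_eq' (Finset.Icc 1 m) (n - j) (fun _ => c / ((f n - f j : ℝ) : ℂ))]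
    simp only [Finset.mem_Icc]
    by_cases hc : n ≤ j + m
    · rw [if_pos (by omega : 1 ≤ n - j ∧ n - j ≤ m),
        if_pos (by omega : n ≠ j ∧ j ≤ n + m ∧ n ≤ j + m)]
    · rw [if_neg (by omega), if_neg (by omega), mul_zero]

lemma coe_smul_xi (c : ℂ) (j : ℕ) : ⇑(c • xi j) = fun n => if n = j then c else 0 := by
  funext n
  rw [lp.coeFn_smul, Pi.smul_apply]
  unfold xi
  by_cases hn : n = j
  · subst hn; rw [lp.single_apply_self]; simp
  · rw [lp.single_apply_ne 2 j _ hn]; simp [hn]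

lemma graph_single (f : ℕ → ℝ) (hf : MemKminus f) (c : ℂ) (j : ℕ) :
    ∃ ψ : l2, InGraphTf f (c • xi j) ψ := by
  have ψmem := memℓp_psi f hf c j
  set ψ : l2 := ⟨psiFun f c j, ψmem⟩ with hψ
  refine ⟨ψ, ?_⟩
  have hform : ∀ m, TfmSeq f m ⇑(c • xi j) = fun n =>
      if n ≠ j ∧ j ≤ n + m ∧ n ≤ j + m then Complex.I * (c / ((f n - f j : ℝ) : ℂ))
      else 0 := by
    intro m; funext n
    rw [coe_smul_xi]
    exact TfmSeq_single f c j m n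
  have hmem : ∀ m, Memℓp (TfmSeq f m ⇑(c • xi j)) 2 := by
    intro m
    rw [hform m]
    refine memℓp_of_finite_support _ (j + m + 1) (fun n hn => ?_)
    rw [if_neg]; rintro ⟨_, _, h3⟩; omega
  refine ⟨hmem, ?_⟩
  have hsum := (lp.hasSum_single (E := fun _ : ℕ => ℂ) (p := 2) (by norm_num) ψ)
  have hW : Tendsto (fun m => Finset.Icc (j - m) (j + m)) atTop atTop := by
    refine tendsto_atTop_finset_of_monotone (fun a b hab => Finset.Icc_subset_Icc
      (Nat.sub_le_sub_left hab j) (by omega)) (fun x => ⟨x + j, ?_⟩)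
    rw [Finset.mem_Icc]; omega
  have htend := hsum.comp hW
  refine Tendsto.congr (fun m => ?_) htend
  apply lp.ext
  funext n
  have lhs : (∑ i ∈ Finset.Icc (j - m) (j + m), lp.single 2 i ((ψ : ∀ _ : ℕ, ℂ) i)) n
      = if n ∈ Finset.Icc (j - m) (j + m) then psiFun f c j n else 0 := by
    simp only [lp.coeFn_sum, Finset.sum_apply, lp.single_apply, Finset.sum_dite_eq, Pi.single_apply,
      Finset.sum_ite_eq]
    rfl
  show (∑ i ∈ Finset.Icc (j - m) (j + m), lp.single 2 i ((ψ : ∀ _ : ℕ, ℂ) i)) n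
      = TfmSeq f m ⇑(c • xi j) n
  rw [lhs, hform m]
  simp only [Finset.mem_Icc]
  by_cases hn : n = j
  · subst hn
    simp [psiFun]
  · simp only [psiFun, if_neg hn]
    split_ifs with h1 h2 <;> first | rfl | omega

lemma graph_zero (f : ℕ → ℝ) : InGraphTf f 0 0 := by
  have h0 : ∀ m, TfmSeq f m ⇑(0 : l2) = fun _ => (0 : ℂ) := by
    intro m; funext n
    simp [TfmSeq, lp.coeFn_zero]
  have hmem : ∀ m, Memℓp (TfmSeq f m ⇑(0 : l2)) 2 := by
    intro m; rw [h0 m]; exact memℓp_of_finite_support _ 0 (fun n _ => rfl)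
  refine ⟨hmem, ?_⟩
  have he : ∀ m, (⟨TfmSeq f m ⇑(0 : l2), hmem m⟩ : l2) = 0 := by
    intro m
    apply lp.ext
    show TfmSeq f m ⇑(0 : l2) = ⇑(0 : l2)
    rw [h0 m, lp.coeFn_zero]
    rfl
  simp only [he]
  exact tendsto_const_nhds

lemma graph_add (f : ℕ → ℝ) {φ₁ φ₂ ψ₁ ψ₂ : l2} (h₁ : InGraphTf f φ₁ ψ₁)
    (h₂ : InGraphTf f φ₂ ψ₂) : InGraphTf f (φ₁ + φ₂) (ψ₁ + ψ₂) := by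
  obtain ⟨m₁, t₁⟩ := h₁
  obtain ⟨m₂, t₂⟩ := h₂
  have key : ∀ m, TfmSeq f m ⇑(φ₁ + φ₂) = TfmSeq f m ⇑φ₁ + TfmSeq f m ⇑φ₂ := by
    intro m; funext n
    simp only [TfmSeq, lp.coeFn_add, Pi.add_apply]
    rw [← mul_add, ← Finset.sum_add_distrib]
    congr 1
    refine Finset.sum_congr rfl (fun k _ => ?_)
    by_cases hk : k ≤ n <;> simp [hk, add_div] <;> ring
  have hmem : ∀ m, Memℓp (TfmSeq f m ⇑(φ₁ + φ₂)) 2 := by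
    intro m; rw [key m]; exact (m₁ m).add (m₂ m)
  refine ⟨hmem, ?_⟩
  refine Tendsto.congr (fun m => ?_) (t₁.add t₂)
  apply lp.ext
  show (TfmSeq f m ⇑φ₁) + (TfmSeq f m ⇑φ₂) = TfmSeq f m ⇑(φ₁ + φ₂)
  rw [key m]

lemma graph_finsum (f : ℕ → ℝ) (hf : MemKminus f) (S : Finset ℕ) (c : ℕ → ℂ) :
    ∃ ψ : l2, InGraphTf f (∑ j ∈ S, c j • xi j) ψ := by
  classical
  induction S using Finset.induction_on with
  | empty => exact ⟨0, by simpa using graph_zero f⟩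
  | @insert a S ha ih =>
    obtain ⟨ψ₁, h₁⟩ := graph_single f hf (c a) a
    obtain ⟨ψ₂, h₂⟩ := ih
    refine ⟨ψ₁ + ψ₂, ?_⟩
    rw [Finset.sum_insert ha]
    exact graph_add f h₁ h₂

theorem stmt1 (f : ℕ → ℝ) (hf : MemKminus f) :
    (∀ φ : l2, FinSupp φ → ∃ ψ : l2, InGraphTf f φ ψ) ∧
    Dense {φ : l2 | ∃ ψ : l2, InGraphTf f φ ψ} := by
  classical
  have main : ∀ φ : l2, FinSupp φ → ∃ ψ : l2, InGraphTf f φ ψ := by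
    intro φ hφ
    have hrepr : φ = ∑ j ∈ hφ.toFinset, (φ j) • xi j := by
      apply lp.ext
      funext n
      rw [lp.coeFn_sum, Finset.sum_apply]
      by_cases hn : n ∈ hφ.toFinset
      · rw [Finset.sum_eq_single n]
        · simp only [coe_smul_xi]
          simp
        · intro b _ hb
          simp only [coe_smul_xi]
          simp [Ne.symm hb]
        · intro h; exact absurd hn h
      · have hφn : (φ : ℕ → ℂ) n = 0 := by
          by_contra h
          exact hn (hφ.mem_toFinset.mpr h)
        rw [hφn, Finset.sum_eq_zero]
        intro b hb
        have hnb : n ≠ b := fun h => (h ▸ hn) hb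
        simp only [coe_smul_xi]
        simp [hnb]
    rw [hrepr]
    exact graph_finsum f hf _ _
  refine ⟨main, ?_⟩
  rw [dense_iff_closure_eq, Set.eq_univ_iff_forall]
  intro φ
  have hsum := (lp.hasSum_single (E := fun _ : ℕ => ℂ) (p := 2) (by norm_num) φ)
  have htend := hsum.comp tendsto_finset_range
  refine mem_closure_of_tendsto htend (Eventually.of_forall (fun M => ?_))
  have : (∑ i ∈ Finset.range M, lp.single 2 i ((φ : ∀ _ : ℕ, ℂ) i))
      = ∑ i ∈ Finset.range M, (φ i) • xi i := by
    refine Finset.sum_congr rfl (fun i _ => ?_)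
    unfold xi
    rw [← lp.single_smul]
    congr 1
    simp
  show (∑ i ∈ Finset.range M, lp.single 2 i ((φ : ∀ _ : ℕ, ℂ) i)) ∈
      {φ : l2 | ∃ ψ : l2, InGraphTf f φ ψ}
  rw [Set.mem_setOf_eq, this]
  exact graph_finsum f hf _ _
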